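/- Let additionally L be a subgroup of Γ with L ⊆ Γ₊. Suppose that (H1) for all x, y, z ∈ Γ₊ the set R\((RxR)⁻¹z ∩ RyR) is finite; (H2) for all x, y ∈ Γ₊ the set RxRyR is contained in the union of finitely many (R,R)-double cosets; (M1) for all y ∈ Γ, x ∈ Γ₊ and z ∈ Γ the set R\((LyR)⁻¹z ∩ RxR) is finite; and (M2) for all y ∈ Γ and x ∈ Γ₊ the set LyRxR is contained in the union of finitely many (L,R)-double cosets. Then for every function φ: Γ → ℂ that is invariant under left multiplication by L and right multiplication by R and vanishes outside finitely many (L,R)-double cosets, and all R-bi-invariant finitely supported f, g: Γ₊ → ℂ, the convolution φ ⋆ f, defined by (φ ⋆ f)(z) := Σ φ(a)·f(a⁻¹z) over the right cosets aR ⊆ Γ with a⁻¹z ∈ Γ₊, is well defined, is again left-L- and right-R-invariant and vanishes outside finitely many (L,R)-double cosets; moreover (φ ⋆ f) ⋆ g = φ ⋆ (f ⋆ g) and φ ⋆ 1_R = φ, where 1_R is the characteristic function of R. Hence this convolution makes the space of such functions φ a unital right module over the convolution algebra H(Γ₊, R). -/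

import Mathlib

open scoped Pointwise

namespace Stmt2

variable {Γ : Type*} [Group Γ]

/-- The orbit set `R\S` of left multiplication by the subgroup `R` on a subset `S ⊆ Γ`. -/
def leftOrbits (R : Subgroup Γ) (S : Set Γ) : Set (Set Γ) :=
  {C | ∃ g ∈ S, C = (R : Set Γ) * {g}}

/-- `A⁻¹x = {a⁻¹ · x : a ∈ A}`. -/
def invMul (A : Set Γ) (x : Γ) : Set Γ := (fun a => a⁻¹ * x) '' A

/-- `f : Γ → ℂ` is an element of the Hecke algebra `H(Γ₊, R)`. -/
def IsHeckeFn (Γp : Subsemigroup Γ) (R : Subgroup Γ) (f : Γ → ℂ) : Prop :=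
  (∀ g, f g ≠ 0 → g ∈ Γp) ∧
  (∀ r ∈ R, ∀ r' ∈ R, ∀ g, f (r * g * r') = f g) ∧
  (∃ D : Finset Γ, ∀ g, f g ≠ 0 → ∃ d ∈ D, g ∈ DoubleCoset.doubleCoset d (R : Set Γ) (R : Set Γ))

/-- `φ : Γ → ℂ` is left-`L`-invariant, right-`R`-invariant and supported on
finitely many `(L,R)`-double cosets. -/
def IsModFn (L R : Subgroup Γ) (φ : Γ → ℂ) : Prop :=
  (∀ l ∈ L, ∀ r ∈ R, ∀ g, φ (l * g * r) = φ g) ∧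
  (∃ D : Finset Γ, ∀ g, φ g ≠ 0 → ∃ d ∈ D, g ∈ DoubleCoset.doubleCoset d (L : Set Γ) (R : Set Γ))

/-- Convolution: `(φ ⋆ f)(z) = Σ φ(a)·f(a⁻¹z)`, the sum running over the cosets `aR`. -/
noncomputable def conv (R : Subgroup Γ) (φ f : Γ → ℂ) : Γ → ℂ :=
  fun z => ∑ᶠ c : Γ ⧸ R, φ (Quotient.out c) * f ((Quotient.out c)⁻¹ * z)

end Stmt2

namespace Stmt2Proof

open Stmt2

variable {Γ : Type*} [Group Γ]

lemma out_rel (R : Subgroup Γ) (a : Γ) : (Quotient.out (a : Γ ⧸ R))⁻¹ * a ∈ R :=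
  QuotientGroup.eq.mp (QuotientGroup.out_eq' (a : Γ ⧸ R))

lemma term_congr (R : Subgroup Γ) {φ f : Γ → ℂ}
    (hφr : ∀ r ∈ R, ∀ g, φ (g * r) = φ g)
    (hfl : ∀ r ∈ R, ∀ g, f (r * g) = f g)
    {a b : Γ} (h : a⁻¹ * b ∈ R) (z : Γ) :
    φ b * f (b⁻¹ * z) = φ a * f (a⁻¹ * z) := by
  have hb : b = a * (a⁻¹ * b) := by group
  rw [hb, hφr _ h a, mul_inv_rev, mul_assoc, hfl _ (inv_mem h)]

lemma orbit_inj (R : Subgroup Γ) (z : Γ) :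
    Function.Injective fun c : Γ ⧸ R => (R : Set Γ) * ({(Quotient.out c)⁻¹ * z} : Set Γ) := by
  intro c c' h
  dsimp only at h
  have h1 : (Quotient.out c)⁻¹ * z ∈ (R : Set Γ) * ({(Quotient.out c')⁻¹ * z} : Set Γ) := by
    rw [← h]
    exact ⟨1, R.one_mem, (Quotient.out c)⁻¹ * z, rfl, one_mul _⟩
  rw [Set.mem_mul] at h1
  obtain ⟨r, hr, y, hy, hxy⟩ := h1
  rw [Set.mem_singleton_iff] at hy
  subst hy
  have h2 : r * (Quotient.out c')⁻¹ = (Quotient.out c)⁻¹ :=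
    mul_right_cancel (b := z) (by rw [mul_assoc]; exact hxy)
  have h3 : (Quotient.out c')⁻¹ * Quotient.out c = r⁻¹ := by
    have h4 := congrArg Inv.inv h2
    rw [mul_inv_rev, inv_inv, inv_inv] at h4
    rw [← h4]
    group
  have h5 : ((Quotient.out c' : Γ) : Γ ⧸ R) = ((Quotient.out c : Γ) : Γ ⧸ R) :=
    QuotientGroup.eq.mpr (by rw [h3]; exact R.inv_mem hr)
  rw [QuotientGroup.out_eq', QuotientGroup.out_eq'] at h5
  exact h5.symm

lemma quot_finite_union (R : Subgroup Γ) (z : Γ) (Y X : Finset Γ) (SY TX : Γ → Set Γ)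
    (hfin : ∀ y ∈ Y, ∀ x ∈ X, (leftOrbits R (invMul (SY y) z ∩ TX x)).Finite) :
    {c : Γ ⧸ R | (∃ y ∈ Y, Quotient.out c ∈ SY y) ∧
      ∃ x ∈ X, (Quotient.out c)⁻¹ * z ∈ TX x}.Finite := by
  apply Set.Finite.of_finite_image (f := fun c : Γ ⧸ R =>
    (R : Set Γ) * ({(Quotient.out c)⁻¹ * z} : Set Γ)) ?_ ((orbit_inj R z).injOn)
  have hbig : (⋃ y ∈ Y, ⋃ x ∈ X, leftOrbits R (invMul (SY y) z ∩ TX x)).Finite :=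
    Set.Finite.biUnion Y.finite_toSet fun y hy =>
      Set.Finite.biUnion X.finite_toSet fun x hx => hfin y hy x hx
  apply hbig.subset
  rintro _ ⟨c, ⟨⟨y, hy, h1⟩, ⟨x, hx, h2⟩⟩, rfl⟩
  exact Set.mem_biUnion hy (Set.mem_biUnion hx
    ⟨(Quotient.out c)⁻¹ * z, ⟨⟨Quotient.out c, h1, rfl⟩, h2⟩, rfl⟩)

lemma finsum_swap {α β : Type*} (F : α → β → ℂ)
    (h : {p : α × β | F p.1 p.2 ≠ 0}.Finite) :
    ∑ᶠ a, ∑ᶠ b, F a b = ∑ᶠ b, ∑ᶠ a, F a b := by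
  classical
  set S := h.toFinset with hS
  set A := S.image Prod.fst with hA
  set B := S.image Prod.snd with hB
  have hmem : ∀ a b, F a b ≠ 0 → a ∈ A ∧ b ∈ B := by
    intro a b hab
    have : (a, b) ∈ S := h.mem_toFinset.mpr hab
    exact ⟨Finset.mem_image_of_mem _ this, Finset.mem_image_of_mem _ this⟩
  have h1 : ∀ a, (∑ᶠ b, F a b) = ∑ b ∈ B, F a b := fun a =>
    finsum_eq_finset_sum_of_support_subset _ (fun b hb => (hmem a b hb).2)
  have h2 : ∀ b, (∑ᶠ a, F a b) = ∑ a ∈ A, F a b := fun b =>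
    finsum_eq_finset_sum_of_support_subset _ (fun a ha => (hmem a b ha).1)
  calc ∑ᶠ a, ∑ᶠ b, F a b = ∑ a ∈ A, ∑ᶠ b, F a b := by
        apply finsum_eq_finset_sum_of_support_subset
        intro a ha
        rw [Function.mem_support] at ha
        by_contra hcon
        apply ha
        apply finsum_eq_zero_of_forall_eq_zero
        intro b
        by_contra hb
        exact hcon (hmem a b hb).1
    _ = ∑ a ∈ A, ∑ b ∈ B, F a b := Finset.sum_congr rfl fun a _ => h1 a
    _ = ∑ b ∈ B, ∑ a ∈ A, F a b := Finset.sum_comm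
    _ = ∑ b ∈ B, ∑ᶠ a, F a b := Finset.sum_congr rfl fun b _ => (h2 b).symm
    _ = ∑ᶠ b, ∑ᶠ a, F a b := by
        symm
        apply finsum_eq_finset_sum_of_support_subset
        intro b hb
        rw [Function.mem_support] at hb
        by_contra hcon
        apply hb
        apply finsum_eq_zero_of_forall_eq_zero
        intro a
        by_contra ha
        exact hcon (hmem a b ha).2

end Stmt2Proof

section Hecke

open Stmt2

variable {Γ : Type*} [Group Γ]

lemma Stmt2Proof.hecke_support (Γp : Subsemigroup Γ) (R : Subgroup Γ)
    (hR : (R : Set Γ) ⊆ (Γp : Set Γ)) {f : Γ → ℂ} (hf : IsHeckeFn Γp R f) :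
    ∃ D : Finset Γ, (∀ d ∈ D, d ∈ Γp) ∧
      ∀ g, f g ≠ 0 → ∃ d ∈ D, g ∈ DoubleCoset.doubleCoset d (R : Set Γ) (R : Set Γ) := by
  classical
  obtain ⟨hmem, -, D0, hD0⟩ := hf
  set h : Γ → Γ := fun d =>
    if hd : ∃ g, f g ≠ 0 ∧ g ∈ DoubleCoset.doubleCoset d (R : Set Γ) (R : Set Γ) then hd.choose else 1
    with hh
  refine ⟨D0.image h, ?_, ?_⟩
  · intro d hd
    simp only [Finset.mem_image] at hd
    obtain ⟨d0, -, rfl⟩ := hd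
    by_cases hc : ∃ g, f g ≠ 0 ∧ g ∈ DoubleCoset.doubleCoset d0 (R : Set Γ) (R : Set Γ)
    · rw [hh]; simp only [dif_pos hc]; exact hmem _ hc.choose_spec.1
    · rw [hh]; simp only [dif_neg hc]; exact hR R.one_mem
  · intro g hg
    obtain ⟨d, hd, hgd⟩ := hD0 g hg
    have hc : ∃ g', f g' ≠ 0 ∧ g' ∈ DoubleCoset.doubleCoset d (R : Set Γ) (R : Set Γ) := ⟨g, hg, hgd⟩
    refine ⟨h d, Finset.mem_image_of_mem h hd, ?_⟩
    have hmem2 : h d ∈ DoubleCoset.doubleCoset d (R : Set Γ) (R : Set Γ) := by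
      rw [hh]; simp only [dif_pos hc]; exact hc.choose_spec.2
    rw [DoubleCoset.doubleCoset_eq_of_mem hmem2]
    exact hgd

end Hecke

open Stmt2 Stmt2Proof in
theorem stmt2 {Γ : Type*} [Group Γ] (Γp : Subsemigroup Γ) (R L : Subgroup Γ)
    (hR : (R : Set Γ) ⊆ (Γp : Set Γ)) (hL : (L : Set Γ) ⊆ (Γp : Set Γ))
    (H1 : ∀ x ∈ Γp, ∀ y ∈ Γp, ∀ z ∈ Γp,
      (leftOrbits R (invMul (DoubleCoset.doubleCoset x (R : Set Γ) (R : Set Γ)) z ∩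
        DoubleCoset.doubleCoset y (R : Set Γ) (R : Set Γ))).Finite)
    (H2 : ∀ x ∈ Γp, ∀ y ∈ Γp, ∃ D : Finset Γ,
      DoubleCoset.doubleCoset x (R : Set Γ) (R : Set Γ) * DoubleCoset.doubleCoset y (R : Set Γ) (R : Set Γ) ⊆
        ⋃ d ∈ D, DoubleCoset.doubleCoset d (R : Set Γ) (R : Set Γ))
    (M1 : ∀ y : Γ, ∀ x ∈ Γp, ∀ z : Γ,
      (leftOrbits R (invMul (DoubleCoset.doubleCoset y (L : Set Γ) (R : Set Γ)) z ∩
        DoubleCoset.doubleCoset x (R : Set Γ) (R : Set Γ))).Finite)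
    (M2 : ∀ y : Γ, ∀ x ∈ Γp, ∃ D : Finset Γ,
      DoubleCoset.doubleCoset y (L : Set Γ) (R : Set Γ) * DoubleCoset.doubleCoset x (R : Set Γ) (R : Set Γ) ⊆
        ⋃ d ∈ D, DoubleCoset.doubleCoset d (L : Set Γ) (R : Set Γ)) :
    ∀ φ f g : Γ → ℂ, IsModFn L R φ → IsHeckeFn Γp R f → IsHeckeFn Γp R g →
      (∀ z : Γ, (Function.support
          (fun c : Γ ⧸ R => φ (Quotient.out c) * f ((Quotient.out c)⁻¹ * z))).Finite) ∧
      IsModFn L R (conv R φ f) ∧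
      conv R (conv R φ f) g = conv R φ (conv R f g) ∧
      conv R φ (Set.indicator (R : Set Γ) 1) = φ := by
  classical
  intro φ f g hφ hf hg
  obtain ⟨hφinv, Dφ, hDφ⟩ := hφ
  have hfinv := hf.2.1
  have hginv := hg.2.1
  have hfp := hf.1
  have hgp := hg.1
  obtain ⟨Df, hDfp, hDf⟩ := hecke_support Γp R hR hf
  obtain ⟨Dg, hDgp, hDg⟩ := hecke_support Γp R hR hg
  -- one-sided invariances
  have hφr : ∀ r ∈ R, ∀ w, φ (w * r) = φ w := fun r hr w => by
    simpa using hφinv 1 L.one_mem r hr w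
  have hφl : ∀ l ∈ L, ∀ w, φ (l * w) = φ w := fun l hl w => by
    simpa using hφinv l hl 1 R.one_mem w
  have hfl : ∀ r ∈ R, ∀ w, f (r * w) = f w := fun r hr w => by
    simpa using hfinv r hr 1 R.one_mem w
  have hfr : ∀ r ∈ R, ∀ w, f (w * r) = f w := fun r hr w => by
    simpa using hfinv 1 R.one_mem r hr w
  have hgl : ∀ r ∈ R, ∀ w, g (r * w) = g w := fun r hr w => by
    simpa using hginv r hr 1 R.one_mem w
  -- Part 1
  have part1 : ∀ z : Γ, (Function.support
      (fun c : Γ ⧸ R => φ (Quotient.out c) * f ((Quotient.out c)⁻¹ * z))).Finite := by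
    intro z
    apply (quot_finite_union R z Dφ Df (fun y => DoubleCoset.doubleCoset y (L : Set Γ) (R : Set Γ))
      (fun x => DoubleCoset.doubleCoset x (R : Set Γ) (R : Set Γ))
      (fun y _ x hx => M1 y x (hDfp x hx) z)).subset
    intro c hc
    rw [Function.mem_support] at hc
    exact ⟨hDφ _ (left_ne_zero_of_mul hc), hDf _ (right_ne_zero_of_mul hc)⟩
  -- support finiteness for f ⋆ g
  have fin_fg : ∀ w : Γ, (Function.support
      (fun c : Γ ⧸ R => f (Quotient.out c) * g ((Quotient.out c)⁻¹ * w))).Finite := by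
    intro w
    by_cases hw : w ∈ Γp
    · apply (quot_finite_union R w Df Dg (fun x => DoubleCoset.doubleCoset x (R : Set Γ) (R : Set Γ))
        (fun y => DoubleCoset.doubleCoset y (R : Set Γ) (R : Set Γ))
        (fun x hx y hy => H1 x (hDfp x hx) y (hDgp y hy) w hw)).subset
      intro c hc
      rw [Function.mem_support] at hc
      exact ⟨hDf _ (left_ne_zero_of_mul hc), hDg _ (right_ne_zero_of_mul hc)⟩
    · have : (Function.support
          (fun c : Γ ⧸ R => f (Quotient.out c) * g ((Quotient.out c)⁻¹ * w))) = ∅ := by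
        rw [Function.support_eq_empty_iff]
        funext c
        by_contra hc
        have h1 : f (Quotient.out c) ≠ 0 := left_ne_zero_of_mul hc
        have h2 : g ((Quotient.out c)⁻¹ * w) ≠ 0 := right_ne_zero_of_mul hc
        exact hw (by simpa using Γp.mul_mem (hfp _ h1) (hgp _ h2))
      rw [this]; exact Set.finite_empty
  -- choose M2 finsets
  have M2' : ∀ p : Γ × Γ, ∃ D : Finset Γ, p.2 ∈ Γp →
      DoubleCoset.doubleCoset p.1 (L : Set Γ) (R : Set Γ) * DoubleCoset.doubleCoset p.2 (R : Set Γ) (R : Set Γ) ⊆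
        ⋃ d ∈ D, DoubleCoset.doubleCoset d (L : Set Γ) (R : Set Γ) := by
    intro p
    by_cases h : p.2 ∈ Γp
    · obtain ⟨D, hD⟩ := M2 p.1 p.2 h; exact ⟨D, fun _ => hD⟩
    · exact ⟨∅, fun h' => absurd h' h⟩
  choose DM2 hDM2 using M2'
  set D2 : Finset Γ := (Dφ ×ˢ Df).biUnion DM2 with hD2
  -- Part 2 : invariance
  have part2inv : ∀ l ∈ L, ∀ r ∈ R, ∀ z, conv R φ f (l * z * r) = conv R φ f z := by
    intro l hl r hr z
    show (∑ᶠ c : Γ ⧸ R, φ (Quotient.out c) * f ((Quotient.out c)⁻¹ * (l * z * r)))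
      = ∑ᶠ c : Γ ⧸ R, φ (Quotient.out c) * f ((Quotient.out c)⁻¹ * z)
    calc (∑ᶠ c : Γ ⧸ R, φ (Quotient.out c) * f ((Quotient.out c)⁻¹ * (l * z * r)))
        = ∑ᶠ c : Γ ⧸ R, φ (Quotient.out (l • c)) * f ((Quotient.out (l • c))⁻¹ * (l * z * r)) :=
          (finsum_eq_of_bijective (fun c : Γ ⧸ R => l • c)
            (MulAction.bijective l) (fun c => rfl)).symm
      _ = ∑ᶠ c : Γ ⧸ R, φ (Quotient.out c) * f ((Quotient.out c)⁻¹ * z) := by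
          apply finsum_congr
          intro c
          set a := Quotient.out c with ha
          set b := Quotient.out (l • c) with hb
          have hrel : b⁻¹ * (l * a) ∈ R := by
            apply QuotientGroup.eq.mp
            rw [hb, QuotientGroup.out_eq']
            have := MulAction.Quotient.mk_smul_out R l c
            rw [smul_eq_mul] at this
            rw [ha, ← this]
          set r₀ := b⁻¹ * (l * a) with hr₀
          have hbeq : b = l * a * r₀⁻¹ := by rw [hr₀]; group
          have h1 : φ b = φ a := by rw [hbeq]; exact hφinv l hl r₀⁻¹ (R.inv_mem hrel) a
          have h2 : f (b⁻¹ * (l * z * r)) = f (a⁻¹ * z) := by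
            have he : b⁻¹ * (l * z * r) = r₀ * (a⁻¹ * z) * r := by rw [hbeq, hr₀]; group
            rw [he, hfinv r₀ hrel r hr]
          rw [h1, h2]
  -- Part 2 : support
  have part2sup : ∀ z, conv R φ f z ≠ 0 →
      ∃ d ∈ D2, z ∈ DoubleCoset.doubleCoset d (L : Set Γ) (R : Set Γ) := by
    intro z hz
    obtain ⟨c, hc⟩ : ∃ c : Γ ⧸ R, φ (Quotient.out c) * f ((Quotient.out c)⁻¹ * z) ≠ 0 := by
      by_contra hcon
      push_neg at hcon
      exact hz (finsum_eq_zero_of_forall_eq_zero hcon)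
    obtain ⟨y, hy, hcy⟩ := hDφ _ (left_ne_zero_of_mul hc)
    obtain ⟨x, hx, hcx⟩ := hDf _ (right_ne_zero_of_mul hc)
    have hzmem : z ∈ DoubleCoset.doubleCoset y (L : Set Γ) (R : Set Γ) *
        DoubleCoset.doubleCoset x (R : Set Γ) (R : Set Γ) := by
      have h3 := Set.mul_mem_mul hcy hcx
      rwa [mul_inv_cancel_left] at h3
    obtain ⟨d, hd, hzd⟩ := Set.mem_iUnion₂.mp (hDM2 (y, x) (hDfp x hx) hzmem)
    exact ⟨d, Finset.mem_biUnion.mpr ⟨(y, x), Finset.mem_product.mpr ⟨hy, hx⟩, hd⟩, hzd⟩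
  refine ⟨part1, ⟨part2inv, D2, part2sup⟩, ?_, ?_⟩
  -- Part 3 : associativity
  · funext z
    set F : Γ ⧸ R → Γ ⧸ R → ℂ := fun c c' =>
      φ (Quotient.out c') * f ((Quotient.out c')⁻¹ * Quotient.out c) *
        g ((Quotient.out c)⁻¹ * z) with hF
    have pairfin : {p : (Γ ⧸ R) × (Γ ⧸ R) | F p.1 p.2 ≠ 0}.Finite := by
      have Cfin : {c : Γ ⧸ R | (∃ d ∈ D2, Quotient.out c ∈
          DoubleCoset.doubleCoset d (L : Set Γ) (R : Set Γ)) ∧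
          ∃ w ∈ Dg, (Quotient.out c)⁻¹ * z ∈ DoubleCoset.doubleCoset w (R : Set Γ) (R : Set Γ)}.Finite :=
        quot_finite_union R z D2 Dg (fun d => DoubleCoset.doubleCoset d (L : Set Γ) (R : Set Γ))
          (fun w => DoubleCoset.doubleCoset w (R : Set Γ) (R : Set Γ))
          (fun d _ w hw => M1 d w (hDgp w hw) z)
      apply (Cfin.biUnion (fun c _ => ((part1 (Quotient.out c)).image (Prod.mk c)))).subset
      intro p hp
      rw [Set.mem_setOf_eq, hF] at hp
      have h1 : φ (Quotient.out p.2) * f ((Quotient.out p.2)⁻¹ * Quotient.out p.1) ≠ 0 :=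
        left_ne_zero_of_mul hp
    -- p.1 ∈ C
      have hφ0 := left_ne_zero_of_mul h1
      have hf0 := right_ne_zero_of_mul h1
      have hg0 : g ((Quotient.out p.1)⁻¹ * z) ≠ 0 := right_ne_zero_of_mul hp
      obtain ⟨y, hy, hcy⟩ := hDφ _ hφ0
      obtain ⟨x, hx, hcx⟩ := hDf _ hf0
      obtain ⟨w, hw, hcw⟩ := hDg _ hg0
      have hamem : Quotient.out p.1 ∈ DoubleCoset.doubleCoset y (L : Set Γ) (R : Set Γ) *
          DoubleCoset.doubleCoset x (R : Set Γ) (R : Set Γ) := by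
        have h3 := Set.mul_mem_mul hcy hcx
        rwa [mul_inv_cancel_left] at h3
      obtain ⟨d, hd, had⟩ := Set.mem_iUnion₂.mp (hDM2 (y, x) (hDfp x hx) hamem)
      have hp1 : p.1 ∈ {c : Γ ⧸ R | (∃ d ∈ D2, Quotient.out c ∈
          DoubleCoset.doubleCoset d (L : Set Γ) (R : Set Γ)) ∧
          ∃ w ∈ Dg, (Quotient.out c)⁻¹ * z ∈ DoubleCoset.doubleCoset w (R : Set Γ) (R : Set Γ)} :=
        ⟨⟨d, Finset.mem_biUnion.mpr ⟨(y, x), Finset.mem_product.mpr ⟨hy, hx⟩, hd⟩, had⟩,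
          ⟨w, hw, hcw⟩⟩
      exact Set.mem_biUnion hp1 ⟨p.2, h1, by simp⟩
    have lhs : conv R (conv R φ f) g z = ∑ᶠ c : Γ ⧸ R, ∑ᶠ c' : Γ ⧸ R, F c c' := by
      show (∑ᶠ c : Γ ⧸ R, conv R φ f (Quotient.out c) * g ((Quotient.out c)⁻¹ * z)) = _
      apply finsum_congr
      intro c
      show (∑ᶠ c' : Γ ⧸ R, φ (Quotient.out c') * f ((Quotient.out c')⁻¹ * Quotient.out c)) *
        g ((Quotient.out c)⁻¹ * z) = _
      exact finsum_mul _ _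
    have rhs : conv R φ (conv R f g) z = ∑ᶠ c' : Γ ⧸ R, ∑ᶠ c : Γ ⧸ R, F c c' := by
      show (∑ᶠ c' : Γ ⧸ R, φ (Quotient.out c') * conv R f g ((Quotient.out c')⁻¹ * z)) = _
      apply finsum_congr
      intro c'
      set a' := Quotient.out c' with ha'
      show φ a' * (∑ᶠ c : Γ ⧸ R, f (Quotient.out c) *
        g ((Quotient.out c)⁻¹ * (a'⁻¹ * z))) = _
      rw [mul_finsum _ _]
      calc (∑ᶠ c : Γ ⧸ R, φ a' * (f (Quotient.out c) * g ((Quotient.out c)⁻¹ * (a'⁻¹ * z))))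
          = ∑ᶠ c : Γ ⧸ R, φ a' * (f (a'⁻¹ * Quotient.out (a' • c)) *
              g ((Quotient.out (a' • c))⁻¹ * z)) := by
            apply finsum_congr
            intro c
            set a := Quotient.out c with ha
            set b := Quotient.out (a' • c) with hb
            have hrel : b⁻¹ * (a' * a) ∈ R := by
              apply QuotientGroup.eq.mp
              rw [hb, QuotientGroup.out_eq']
              have := MulAction.Quotient.mk_smul_out R a' c
              rw [smul_eq_mul] at this
              rw [ha, ← this]
            set r₀ := b⁻¹ * (a' * a) with hr₀
            have hbeq : b = a' * a * r₀⁻¹ := by rw [hr₀]; group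
            have h1 : f (a'⁻¹ * b) = f a := by
              have he : a'⁻¹ * b = a * r₀⁻¹ := by rw [hbeq]; group
              rw [he, hfr r₀⁻¹ (R.inv_mem hrel)]
            have h2 : g (b⁻¹ * z) = g (a⁻¹ * (a'⁻¹ * z)) := by
              have he : b⁻¹ * z = r₀ * (a⁻¹ * (a'⁻¹ * z)) := by rw [hbeq, hr₀]; group
              rw [he, hgl r₀ hrel]
            rw [h1, h2]
        _ = ∑ᶠ c : Γ ⧸ R, φ a' * (f (a'⁻¹ * Quotient.out c) * g ((Quotient.out c)⁻¹ * z)) :=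
            finsum_eq_of_bijective (fun c : Γ ⧸ R => a' • c)
              (MulAction.bijective a') (fun c => rfl)
        _ = ∑ᶠ c : Γ ⧸ R, F c c' := by
            exact finsum_congr fun c => (mul_assoc _ _ _).symm
    rw [lhs, rhs]
    exact finsum_swap F pairfin
  -- Part 4 : unit
  · funext z
    show (∑ᶠ c : Γ ⧸ R, φ (Quotient.out c) *
      Set.indicator (R : Set Γ) 1 ((Quotient.out c)⁻¹ * z)) = φ z
    have hsingle : (∑ᶠ c : Γ ⧸ R, φ (Quotient.out c) *
        Set.indicator (R : Set Γ) 1 ((Quotient.out c)⁻¹ * z))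
        = φ (Quotient.out (z : Γ ⧸ R)) *
          Set.indicator (R : Set Γ) 1 ((Quotient.out (z : Γ ⧸ R))⁻¹ * z) := by
      apply finsum_eq_single
      intro c hc
      have hnot : (Quotient.out c)⁻¹ * z ∉ (R : Set Γ) := by
        intro hmem
        apply hc
        have h5 : ((Quotient.out c : Γ) : Γ ⧸ R) = (z : Γ ⧸ R) := QuotientGroup.eq.mpr hmem
        rw [QuotientGroup.out_eq'] at h5
        exact h5
      rw [Set.indicator_of_notMem hnot, mul_zero]
    rw [hsingle]
    have hrel := out_rel R z
    rw [Set.indicator_of_mem hrel, Pi.one_apply, mul_one]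
    have h2 : Quotient.out (z : Γ ⧸ R) = z * ((Quotient.out (z : Γ ⧸ R))⁻¹ * z)⁻¹ := by group
    rw [h2]
    exact hφr _ (R.inv_mem hrel) z
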